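/- Let x, h ∈ ℝ^N with block structure over index set {1,…,n}, let T₀, T̃ ⊂ {1,…,n}, 0 ≤ ω ≤ 1, and 0 < p ≤ 1. Suppose ω‖x_{T̃} + h_{T̃}‖_{2,p}^p + ‖x_{T̃^c} + h_{T̃^c}‖_{2,p}^p ≤ ω‖x_{T̃}‖_{2,p}^p + ‖x_{T̃^c}‖_{2,p}^p. Then ω‖h_{T̃∩T₀^c}‖_{2,p}^p + ‖h_{T̃^c∩T₀^c}‖_{2,p}^p ≤ ‖h_{T̃^c∩T₀}‖_{2,p}^p + ω‖h_{T̃∩T₀}‖_{2,p}^p + 2(‖x_{T̃^c∩T₀^c}‖_{2,p}^p + ω‖x_{T̃∩T₀^c}‖_{2,p}^p). -/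

import Mathlib

lemma rpow_subadd_aux {p a b : ℝ} (ha : 0 ≤ a) (hb : 0 ≤ b) (hp : 0 ≤ p) (hp1 : p ≤ 1) :
    (a + b) ^ p ≤ a ^ p + b ^ p := by
  have h := NNReal.rpow_add_le_add_rpow ⟨a, ha⟩ ⟨b, hb⟩ hp hp1
  have h2 := NNReal.coe_le_coe.2 h
  exact h2

lemma norm_rpow_le_aux {p : ℝ} (hp : 0 ≤ p) (hp1 : p ≤ 1) {E : Type*} [NormedAddCommGroup E]
    (a b : E) : ‖a‖ ^ p ≤ ‖a + b‖ ^ p + ‖b‖ ^ p := by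
  have h1 : ‖a‖ ≤ ‖a + b‖ + ‖b‖ := by
    calc ‖a‖ = ‖(a + b) + (-b)‖ := by rw [add_neg_cancel_right]
    _ ≤ ‖a + b‖ + ‖-b‖ := norm_add_le _ _
    _ = ‖a + b‖ + ‖b‖ := by rw [norm_neg]
  calc ‖a‖ ^ p ≤ (‖a + b‖ + ‖b‖) ^ p := Real.rpow_le_rpow (norm_nonneg _) h1 hp
  _ ≤ ‖a + b‖ ^ p + ‖b‖ ^ p := rpow_subadd_aux (norm_nonneg _) (norm_nonneg _) hp hp1

/-- Cone condition derived from the optimality of the weighted mixed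
ℓ₂/ℓ_p objective. -/
theorem weighted_cone_condition (n d : ℕ) (p ω : ℝ) (hp : 0 < p) (hp1 : p ≤ 1)
    (hω0 : 0 ≤ ω) (hω1 : ω ≤ 1)
    (x h : Fin n → EuclideanSpace ℝ (Fin d)) (T0 Tt : Finset (Fin n))
    (hopt : ω * ∑ i ∈ Tt, ‖x i + h i‖ ^ p + ∑ i ∈ Ttᶜ, ‖x i + h i‖ ^ p ≤
      ω * ∑ i ∈ Tt, ‖x i‖ ^ p + ∑ i ∈ Ttᶜ, ‖x i‖ ^ p) :
    ω * ∑ i ∈ Tt ∩ T0ᶜ, ‖h i‖ ^ p + ∑ i ∈ Ttᶜ ∩ T0ᶜ, ‖h i‖ ^ p ≤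
      ∑ i ∈ Ttᶜ ∩ T0, ‖h i‖ ^ p + ω * ∑ i ∈ Tt ∩ T0, ‖h i‖ ^ p +
      2 * (∑ i ∈ Ttᶜ ∩ T0ᶜ, ‖x i‖ ^ p + ω * ∑ i ∈ Tt ∩ T0ᶜ, ‖x i‖ ^ p) := by
  have hsplit : ∀ (s : Finset (Fin n)) (f : Fin n → ℝ),
      ∑ i ∈ s, f i = ∑ i ∈ s ∩ T0, f i + ∑ i ∈ s ∩ T0ᶜ, f i := by
    intro s f
    have hd : s \ T0 = s ∩ T0ᶜ := by ext i; simp [Finset.mem_sdiff]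
    rw [← Finset.sum_inter_add_sum_sdiff s T0 f, hd]
  -- pointwise bounds summed
  have hb1 : ∑ i ∈ Tt ∩ T0, ‖x i‖ ^ p ≤
      ∑ i ∈ Tt ∩ T0, ‖x i + h i‖ ^ p + ∑ i ∈ Tt ∩ T0, ‖h i‖ ^ p := by
    rw [← Finset.sum_add_distrib]
    exact Finset.sum_le_sum fun i _ => norm_rpow_le_aux hp.le hp1 (x i) (h i)
  have hb3 : ∑ i ∈ Ttᶜ ∩ T0, ‖x i‖ ^ p ≤
      ∑ i ∈ Ttᶜ ∩ T0, ‖x i + h i‖ ^ p + ∑ i ∈ Ttᶜ ∩ T0, ‖h i‖ ^ p := by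
    rw [← Finset.sum_add_distrib]
    exact Finset.sum_le_sum fun i _ => norm_rpow_le_aux hp.le hp1 (x i) (h i)
  have hb2 : ∑ i ∈ Tt ∩ T0ᶜ, ‖h i‖ ^ p ≤
      ∑ i ∈ Tt ∩ T0ᶜ, ‖x i + h i‖ ^ p + ∑ i ∈ Tt ∩ T0ᶜ, ‖x i‖ ^ p := by
    rw [← Finset.sum_add_distrib]
    refine Finset.sum_le_sum fun i _ => ?_
    have := norm_rpow_le_aux hp.le hp1 (h i) (x i)
    simpa [add_comm] using this
  have hb4 : ∑ i ∈ Ttᶜ ∩ T0ᶜ, ‖h i‖ ^ p ≤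
      ∑ i ∈ Ttᶜ ∩ T0ᶜ, ‖x i + h i‖ ^ p + ∑ i ∈ Ttᶜ ∩ T0ᶜ, ‖x i‖ ^ p := by
    rw [← Finset.sum_add_distrib]
    refine Finset.sum_le_sum fun i _ => ?_
    have := norm_rpow_le_aux hp.le hp1 (h i) (x i)
    simpa [add_comm] using this
  rw [hsplit Tt (fun i => ‖x i + h i‖ ^ p), hsplit Ttᶜ (fun i => ‖x i + h i‖ ^ p),
    hsplit Tt (fun i => ‖x i‖ ^ p), hsplit Ttᶜ (fun i => ‖x i‖ ^ p)] at hopt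
  nlinarith [mul_le_mul_of_nonneg_left hb1 hω0, mul_le_mul_of_nonneg_left hb2 hω0,
    hb3, hb4, hopt]
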